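/- For distinct a, b ∈ 𝔹², the Hilbert distance h(a,b) equals log H, where H = [Re((1 − a·conj(b))²) + |a−b|² + 2·Re(1 − a·conj(b))·√(|a−b|² − (Im(a·conj(b)))²)] / [(1−|a|²)(1−|b|²)]. -/

import Mathlib

open Complex ComplexConjugate

/-- The line through two points `a`, `b` in the complex plane. -/
noncomputable def lineThrough (a b : ℂ) : Set ℂ :=
  {z : ℂ | ∃ t : ℝ, z = a + (t : ℂ) * (b - a)}

/-- The Hilbert metric of the unit disk: for `a ≠ b`,
`h(a,b) = log (|u-b||a-v| / (|u-a||b-v|))` where `u, v` are the intersection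
points of the line through `a, b` with the unit circle, ordered so that
`|u-a| < |u-b|` (equivalently `|v-b| < |v-a|`). For `a = b` the defining set
is empty and `sSup ∅ = 0`. -/
noncomputable def hilbertDist (a b : ℂ) : ℝ :=
  sSup { d : ℝ | ∃ u v : ℂ, ‖u‖ = 1 ∧ ‖v‖ = 1 ∧
    u ∈ lineThrough a b ∧ v ∈ lineThrough a b ∧
    dist u a < dist u b ∧ dist v b < dist v a ∧
    d = Real.log ((dist u b * dist a v) / (dist u a * dist b v)) }

/-- The hyperbolic (Poincaré) metric of the unit disk, defined by
`sinh (ρ(a,b)/2) = |a-b| / √((1-|a|²)(1-|b|²))`. -/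
noncomputable def rhoDist (a b : ℂ) : ℝ :=
  2 * Real.arsinh (‖a - b‖ /
    Real.sqrt ((1 - ‖a‖ ^ 2) * (1 - ‖b‖ ^ 2)))

/-- The visual angle metric of the unit disk:
`v(a,b) = sup {∠(a,z,b) : z ∈ ∂𝔹²}`. -/
noncomputable def visualAngle (a b : ℂ) : ℝ :=
  sSup { α : ℝ | ∃ z : ℂ, ‖z‖ = 1 ∧ α = EuclideanGeometry.angle a z b }

/-- Euclidean distance from the origin to the line through `a` and `b`. -/
noncomputable def distToLine (a b : ℂ) : ℝ := Metric.infDist 0 (lineThrough a b)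

/-- The Hilbert disk `B_h(z₀, t)`. -/
noncomputable def hilbertBall (z₀ : ℂ) (t : ℝ) : Set ℂ :=
  {z : ℂ | ‖z‖ < 1 ∧ hilbertDist z₀ z < t}

/-- The hyperbolic disk `B_ρ(z₀, t)`. -/
noncomputable def rhoBall (z₀ : ℂ) (t : ℝ) : Set ℂ :=
  {z : ℂ | ‖z‖ < 1 ∧ rhoDist z₀ z < t}

private lemma quadFactor (α β q S t : ℝ) (hα : α ≠ 0) (hS : S^2 = β^2 + α*(1-q)) :
    α*t^2 + 2*β*t + (q-1) = 0 ↔ t = (-β-S)/α ∨ t = (-β+S)/α := by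
  have key : α*t^2 + 2*β*t + (q-1) = α * (t - (-β-S)/α) * (t - (-β+S)/α) := by
    field_simp
    ring_nf
    nlinarith [hS]
  rw [key]
  constructor
  · intro h
    rcases mul_eq_zero.1 h with h | h
    · rcases mul_eq_zero.1 h with h | h
      · exact absurd h hα
      · exact Or.inl (sub_eq_zero.1 h)
    · exact Or.inr (sub_eq_zero.1 h)
  · rintro (rfl | rfl) <;> ring

set_option maxHeartbeats 2000000 in
/-- Explicit formula for the Hilbert distance: `h(a,b) = log H` with
`H = (Re((1-a·conj b)²) + |a-b|² + 2 Re(1-a·conj b)·√(|a-b|² - (Im(a·conj b))²))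
      / ((1-|a|²)(1-|b|²))`. -/
theorem hilbertDist_eq_log (a b : ℂ)
    (ha : ‖a‖ < 1) (hb : ‖b‖ < 1) (hab : a ≠ b) :
    hilbertDist a b = Real.log (
      (((1 - a * conj b) ^ 2).re + ‖a - b‖ ^ 2 +
        2 * (1 - a * conj b).re *
          Real.sqrt (‖a - b‖ ^ 2 - ((a * conj b).im) ^ 2)) /
      ((1 - ‖a‖ ^ 2) * (1 - ‖b‖ ^ 2))) := by
  set q1 : ℝ := Complex.normSq a with hq1
  set q2 : ℝ := Complex.normSq b with hq2
  set s : ℝ := (a * conj b).re with hs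
  set m : ℝ := (a * conj b).im with hm
  set al : ℝ := Complex.normSq (b - a) with hal
  set be : ℝ := s - q1 with hbe
  set R : ℝ := 1 - s with hR
  set D : ℝ := be^2 + al*(1-q1) with hD
  set S : ℝ := Real.sqrt D with hSdef
  clear_value q1 q2 s m al be R D S
  -- basic positivity
  have hq1lt : q1 < 1 := by
    rw [hq1, ← Complex.sq_norm]
    nlinarith [norm_nonneg a]
  have hq2lt : q2 < 1 := by
    rw [hq2, ← Complex.sq_norm]
    nlinarith [norm_nonneg b]
  have hba : b - a ≠ 0 := sub_ne_zero.2 (Ne.symm hab)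
  have halpos : 0 < al := by rw [hal]; exact Complex.normSq_pos.2 hba
  have hDpos : 0 < D := by rw [hD]; nlinarith
  have hS2 : S^2 = D := by rw [hSdef]; exact Real.sq_sqrt hDpos.le
  have hSpos : 0 < S := by rw [hSdef]; exact Real.sqrt_pos.2 hDpos
  -- coordinate identities
  have halid : al = q1 + q2 - 2*s := by
    rw [hal, hq1, hq2, hs]
    simp [Complex.normSq_apply, Complex.mul_re, Complex.sub_re, Complex.sub_im]
    ring
  have hDm : D = al - m^2 := by
    rw [hD, hbe, hal, hq1, hs, hm]
    simp [Complex.normSq_apply, Complex.mul_re, Complex.mul_im, Complex.sub_re, Complex.sub_im]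
    ring
  have hRbe : R = 1 - q1 - be := by rw [hR, hbe]; ring
  have hRS2 : R^2 - S^2 = (1-q1)*(1-q2) := by
    rw [hS2, hD, hR, hbe, halid]; ring
  have hslt : s < 1 := by
    have h1 : s ≤ ‖a‖ * ‖b‖ := by
      calc s = (a * conj b).re := hs
        _ ≤ ‖a*conj b‖ := Complex.re_le_norm _
        _ = ‖a‖ * ‖b‖ := by simp [map_mul]
    nlinarith [norm_nonneg a, norm_nonneg b]
  have hRpos : 0 < R := by rw [hR]; linarith
  have hRSpos : 0 < R - S := by nlinarith
  have hbeS : 0 < be + S := by nlinarith [sq_nonneg (be + S)]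
  have halbeS : al + be < S := by nlinarith [sq_nonneg (al + be + S)]
  -- the two roots
  set t1 : ℝ := (-be - S)/al with ht1
  set t2 : ℝ := (-be + S)/al with ht2
  clear_value t1 t2
  have ht1neg : t1 < 0 := by
    rw [ht1]
    exact div_neg_of_neg_of_pos (by linarith) halpos
  have ht2gt : 1 < t2 := by
    rw [ht2, one_lt_div halpos]
    linarith
  -- membership on circle iff root
  have hcirc : ∀ t : ℝ, ‖a + (t:ℂ)*(b-a)‖ = 1 ↔ (t = t1 ∨ t = t2) := by
    intro t
    have hns : Complex.normSq (a + (t:ℂ)*(b-a)) = al*t^2 + 2*be*t + q1 := by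
      rw [hal, hbe, hs, hq1]
      simp [Complex.normSq_apply, Complex.add_re, Complex.add_im, Complex.mul_re, Complex.mul_im,
        Complex.sub_re, Complex.sub_im]
      ring
    rw [Complex.norm_def, Real.sqrt_eq_one, hns]
    have : al*t^2 + 2*be*t + q1 = 1 ↔ al*t^2 + 2*be*t + (q1-1) = 0 := by constructor <;> intro <;> linarith
    rw [this, ht1, ht2]
    exact quadFactor al be q1 S t halpos.ne' (by rw [hS2, hD])
  -- distances
  have hdA : ∀ t : ℝ, dist (a + (t:ℂ)*(b-a)) a = |t| * ‖b-a‖ := by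
    intro t
    rw [Complex.dist_eq, show a + (t:ℂ)*(b-a) - a = (t:ℂ)*(b-a) by ring, norm_mul,
      Complex.norm_real, Real.norm_eq_abs]
  have hdB : ∀ t : ℝ, dist (a + (t:ℂ)*(b-a)) b = |t-1| * ‖b-a‖ := by
    intro t
    rw [Complex.dist_eq, show a + (t:ℂ)*(b-a) - b = ((t-1:ℝ):ℂ)*(b-a) by push_cast; ring, norm_mul,
      Complex.norm_real, Real.norm_eq_abs]
  have hcpos : 0 < ‖b-a‖ := norm_pos_iff.mpr hba
  have hS2' : S^2 = be^2 + al*(1-q1) := by rw [hS2, hD]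
  -- cross ratio algebra
  have h1 : (1 - t1) * t2 = (R + S)/al := by
    rw [ht1, ht2, hRbe]
    field_simp
    linear_combination hS2'
  have h2 : (-t1) * (t2 - 1) = (R - S)/al := by
    rw [ht1, ht2, hRbe]
    field_simp
    linear_combination hS2'
  have halm : al = S^2 + m^2 := by rw [hS2, hDm]; ring
  -- value of the cross-ratio log
  have hval : Real.log ((dist (a + (t1:ℂ)*(b-a)) b * dist a (a + (t2:ℂ)*(b-a))) /
        (dist (a + (t1:ℂ)*(b-a)) a * dist b (a + (t2:ℂ)*(b-a)))) =
      Real.log ((R+S)/(R-S)) := by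
    rw [dist_comm a, dist_comm b, hdA, hdB, hdA, hdB]
    congr 1
    rw [abs_of_neg ht1neg, abs_of_neg (by linarith : t1 - 1 < 0),
      abs_of_pos (by linarith : (0:ℝ) < t2), abs_of_pos (by linarith : (0:ℝ) < t2 - 1)]
    have hdenpos : 0 < (-t1 * ‖b-a‖) * ((t2-1) * ‖b-a‖) := by
      apply mul_pos <;> apply mul_pos
      · linarith
      · exact hcpos
      · linarith
      · exact hcpos
    rw [div_eq_div_iff hdenpos.ne' hRSpos.ne']
    linear_combination (‖b-a‖^2*(R-S)) * h1 - (‖b-a‖^2*(R+S)) * h2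
  -- the defining set is a singleton
  have hseteq : { d : ℝ | ∃ u v : ℂ, ‖u‖ = 1 ∧ ‖v‖ = 1 ∧
      u ∈ lineThrough a b ∧ v ∈ lineThrough a b ∧
      dist u a < dist u b ∧ dist v b < dist v a ∧
      d = Real.log ((dist u b * dist a v) / (dist u a * dist b v)) }
      = {Real.log ((R+S)/(R-S))} := by
    apply Set.eq_singleton_iff_unique_mem.2
    constructor
    · refine ⟨a + (t1:ℂ)*(b-a), a + (t2:ℂ)*(b-a), (hcirc t1).2 (Or.inl rfl),
        (hcirc t2).2 (Or.inr rfl), ⟨t1, rfl⟩, ⟨t2, rfl⟩, ?_, ?_, hval.symm⟩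
      · rw [hdA, hdB]
        apply mul_lt_mul_of_pos_right _ hcpos
        rw [abs_of_neg ht1neg, abs_of_neg (by linarith : t1 - 1 < 0)]
        linarith
      · rw [hdA, hdB]
        apply mul_lt_mul_of_pos_right _ hcpos
        rw [abs_of_pos (by linarith : (0:ℝ) < t2), abs_of_pos (by linarith : (0:ℝ) < t2 - 1)]
        linarith
    · rintro d ⟨u, v, hu1, hv1, ⟨tu, rfl⟩, ⟨tv, rfl⟩, hua, hvb, rfl⟩
      have htu : tu = t1 := by
        rcases (hcirc tu).1 hu1 with h | h
        · exact h
        · exfalso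
          rw [h, hdA, hdB] at hua
          rw [abs_of_pos (by linarith : (0:ℝ) < t2), abs_of_pos (by linarith : (0:ℝ) < t2 - 1)] at hua
          have := lt_of_mul_lt_mul_right hua hcpos.le
          linarith
      have htv : tv = t2 := by
        rcases (hcirc tv).1 hv1 with h | h
        · exfalso
          rw [h, hdA, hdB] at hvb
          rw [abs_of_neg ht1neg, abs_of_neg (by linarith : t1 - 1 < 0)] at hvb
          have := lt_of_mul_lt_mul_right hvb hcpos.le
          linarith
        · exact h
      rw [htu, htv]
      exact hval
  -- final identification of the explicit formula
  have hnum : ((1 - a * conj b) ^ 2).re = R^2 - m^2 := by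
    rw [hR, hs, hm]
    simp [pow_two, Complex.mul_re, Complex.sub_re, Complex.sub_im]
    ring
  have habs2 : ‖a-b‖^2 = al := by
    rw [hal, Complex.sq_norm, show a - b = -(b-a) by ring, Complex.normSq_neg]
  have hreR : (1 - a * conj b).re = R := by
    rw [hR, hs]; simp [Complex.sub_re]
  have hsqrtS : Real.sqrt (‖a-b‖^2 - m^2) = S := by
    rw [habs2, hSdef]
    congr 1
    rw [hDm]
  have hden : (1 - ‖a‖^2) * (1 - ‖b‖^2) = (1-q1)*(1-q2) := by
    rw [hq1, hq2, Complex.sq_norm, Complex.sq_norm]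
  have hdenpos : 0 < (1-q1)*(1-q2) := mul_pos (by linarith) (by linarith)
  rw [hilbertDist, hseteq, csSup_singleton]
  congr 1
  rw [hnum, hreR, hsqrtS, habs2, hden]
  rw [div_eq_div_iff hRSpos.ne' hdenpos.ne']
  linear_combination (-(R+S))*hRS2 - (R-S)*halm
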